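/- For λ_c, λ_d, c_s > 0, the second derivative of V(b) = (c_s + M_d(b))/((λ_d/(λ_c+λ_d))(1 − e^{−(λ_d+λ_c)b})) at its unique critical point b* > 0 is nonnegative, so b* is the global minimizer of V on (0, ∞). -/

import Mathlib

open Real

theorem stmt_19 (lc ld cs : ℝ) (hlc : 0 < lc) (hld : 0 < ld) (hcs : 0 < cs)
    (V : ℝ → ℝ)
    (hV : ∀ b, V b =
      (cs + (ld / (ld + lc)) * (b - (1 - Real.exp (-(ld + lc) * b)) / (lc + ld))) /
        ((ld / (lc + ld)) * (1 - Real.exp (-(ld + lc) * b))))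
    (bstar : ℝ) (hb : 0 < bstar)
    (hcrit : Real.exp (-(lc + ld) * bstar) *
      (1 + (cs / ld) * (lc + ld) ^ 2 + bstar * (lc + ld)) = 1) :
    0 ≤ deriv (deriv V) bstar ∧ ∀ b > (0 : ℝ), V bstar ≤ V b := by
  set s : ℝ := lc + ld with hs_def
  have hs : 0 < s := by positivity
  set K : ℝ := cs * s / ld with hK_def
  have hK : 0 < K := by positivity
  have hsc : ld + lc = s := by rw [hs_def]; ring
  clear_value s K
  -- simplified form of V away from 0
  have hVW : ∀ b : ℝ, b ≠ 0 → V b = (K + b) / (1 - Real.exp (-(s * b))) - 1 / s := by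
    intro b hb0
    have hE1 : Real.exp (-(s * b)) ≠ 1 := by
      intro h
      rw [Real.exp_eq_one_iff] at h
      have : s * b = 0 := by linarith
      rcases mul_eq_zero.mp this with h | h
      · exact absurd h hs.ne'
      · exact hb0 h
    have hD : 1 - Real.exp (-(s * b)) ≠ 0 := sub_ne_zero.mpr (Ne.symm hE1)
    rw [hV b, hsc]
    have harg : -s * b = -(s * b) := by ring
    rw [harg]
    have h1 : cs + ld / s * (b - (1 - Real.exp (-(s * b))) / s)
        = (ld / s) * ((K + b) - (1 - Real.exp (-(s * b))) / s) := by
      rw [hK_def]; field_simp; ring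
    rw [h1, mul_div_mul_left _ _ (by positivity : ld / s ≠ 0)]
    field_simp [hD]
    rw [sub_div, mul_comm b s, div_self hD]
  -- critical equation in simplified form
  have hEb : Real.exp (-(s * bstar)) * Real.exp (s * bstar) = 1 := by
    rw [← Real.exp_add]; simp
  have hcrit' : Real.exp (s * bstar) = 1 + s * (K + bstar) := by
    have h1 : Real.exp (-(s * bstar)) * (1 + s * (K + bstar)) = 1 := by
      have : -s * bstar = -(s * bstar) := by ring
      rw [this] at hcrit
      have hKs : (cs / ld) * s ^ 2 = s * K := by
        rw [hK_def]; field_simp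
      calc Real.exp (-(s * bstar)) * (1 + s * (K + bstar))
          = Real.exp (-(s * bstar)) * (1 + (cs / ld) * s ^ 2 + bstar * s) := by
            rw [hKs]; ring
        _ = 1 := hcrit
    have hene : Real.exp (-(s * bstar)) ≠ 0 := (Real.exp_pos _).ne'
    field_simp at h1 ⊢
    nlinarith [hEb, h1, Real.exp_pos (-(s * bstar))]
  have hDstar : 0 < 1 - Real.exp (-(s * bstar)) := by
    have : Real.exp (-(s * bstar)) < 1 := by
      rw [Real.exp_lt_one_iff]
      nlinarith
    linarith
  -- V bstar = K + bstar
  have hVbstar : V bstar = K + bstar := by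
    rw [hVW bstar hb.ne']
    have hEstar : Real.exp (-(s * bstar)) * (1 + s * (K + bstar)) = 1 := by
      rw [← hcrit']; exact hEb
    rw [div_sub_div _ _ hDstar.ne' hs.ne', div_eq_iff (mul_ne_zero hDstar.ne' hs.ne')]
    nlinarith [hEstar]
  constructor
  · -- second derivative nonneg
    -- W1 is the derivative of the simplified V
    set E : ℝ → ℝ := fun b => Real.exp (-(s * b)) with hE_def
    set D : ℝ → ℝ := fun b => 1 - E b with hD_def
    set N : ℝ → ℝ := fun b => D b - (K + b) * s * E b with hN_def
    set W1 : ℝ → ℝ := fun b => N b / (D b) ^ 2 with hW1_def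
    have hEderiv : ∀ b : ℝ, HasDerivAt E (-s * E b) b := by
      intro b
      have h1 : HasDerivAt (fun x : ℝ => -(s * x)) (-s) b := by
        have := ((hasDerivAt_id b).const_mul s).neg
        rw [show -s = -(s * 1) by ring]; exact this
      have := h1.exp
      convert this using 1
      simp [hE_def]; ring
    have hDderiv : ∀ b : ℝ, HasDerivAt D (s * E b) b := by
      intro b
      have := (hasDerivAt_const b (1:ℝ)).sub (hEderiv b)
      rw [show s * E b = 0 - -s * E b by ring]; exact this
    have hDne : ∀ b : ℝ, b ≠ 0 → D b ≠ 0 := by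
      intro b hb0
      have : E b ≠ 1 := by
        rw [hE_def]
        simp only []
        intro h
        rw [Real.exp_eq_one_iff] at h
        have : s * b = 0 := by linarith
        rcases mul_eq_zero.mp this with h | h
        · exact absurd h hs.ne'
        · exact hb0 h
      exact sub_ne_zero.mpr (Ne.symm this)
    have hWderiv : ∀ b : ℝ, b ≠ 0 → HasDerivAt (fun x => (K + x) / D x - 1 / s) (W1 b) b := by
      intro b hb0
      have hnum : HasDerivAt (fun x : ℝ => K + x) 1 b := by
        simpa using (hasDerivAt_id b).const_add K
      have := (hnum.div (hDderiv b) (hDne b hb0)).sub_const (1 / s)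
      rw [show W1 b = (1 * D b - (K + b) * (s * E b)) / D b ^ 2 by
        simp only [hW1_def, hN_def]; ring]
      exact this
    -- deriv V agrees with W1 near bstar
    have hopen : {x : ℝ | x ≠ 0} ∈ nhds bstar := by
      exact isOpen_compl_singleton.mem_nhds hb.ne'
    have hderivV : ∀ b : ℝ, b ≠ 0 → deriv V b = W1 b := by
      intro b hb0
      have hmem : {x : ℝ | x ≠ 0} ∈ nhds b := isOpen_compl_singleton.mem_nhds hb0
      have heq : V =ᶠ[nhds b] (fun x => (K + x) / D x - 1 / s) := by
        filter_upwards [hmem] with x hx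
        exact hVW x hx
      rw [heq.deriv_eq]
      exact (hWderiv b hb0).deriv
    have heq2 : deriv V =ᶠ[nhds bstar] W1 := by
      filter_upwards [hopen] with x hx
      exact hderivV x hx
    rw [heq2.deriv_eq]
    -- derivative of W1 at bstar
    have hNderiv : ∀ b : ℝ, HasDerivAt N ((K + b) * s ^ 2 * E b) b := by
      intro b
      have h1 : HasDerivAt (fun x : ℝ => (K + x) * s * E x)
          ((1 * s) * E b + ((K + b) * s) * (-s * E b)) b := by
        have ha : HasDerivAt (fun x : ℝ => (K + x) * s) (1 * s) b := by
          simpa using ((hasDerivAt_id b).const_add K).mul_const s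
        exact ha.mul (hEderiv b)
      have := (hDderiv b).sub h1
      rw [show (K + b) * s ^ 2 * E b = s * E b - ((1 * s) * E b + ((K + b) * s) * (-s * E b)) by ring]
      exact this
    have hD2deriv : HasDerivAt (fun x => (D x) ^ 2) (2 * D bstar ^ 1 * (s * E bstar)) bstar := by
      exact (hDderiv bstar).pow 2
    have hNstar : N bstar = 0 := by
      have hEstar : E bstar * (1 + s * (K + bstar)) = 1 := by
        rw [hE_def]; simp only []; rw [← hcrit']; exact hEb
      rw [hN_def, hD_def]
      simp only []
      nlinarith [hEstar]
    have hD2ne : (D bstar) ^ 2 ≠ 0 := pow_ne_zero 2 (hDne bstar hb.ne')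
    have hW1deriv : HasDerivAt W1
        ((((K + bstar) * s ^ 2 * E bstar) * (D bstar) ^ 2 -
          N bstar * (2 * D bstar ^ 1 * (s * E bstar))) / ((D bstar) ^ 2) ^ 2) bstar :=
      (hNderiv bstar).div hD2deriv hD2ne
    rw [hW1deriv.deriv, hNstar]
    have hEpos : 0 < E bstar := Real.exp_pos _
    have hDpos : 0 < D bstar := by rw [hD_def]; exact hDstar
    apply div_nonneg
    · have h1 : (0:ℝ) ≤ K + bstar := by linarith
      have h2 : (0:ℝ) ≤ s ^ 2 := sq_nonneg s
      have h3 : (0:ℝ) ≤ D bstar ^ 2 := sq_nonneg _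
      nlinarith [mul_nonneg (mul_nonneg (mul_nonneg h1 h2) hEpos.le) h3]
    · positivity
  · -- global minimum
    intro b hb0
    rw [hVbstar, hVW b (ne_of_gt hb0)]
    have hDb : 0 < 1 - Real.exp (-(s * b)) := by
      have : Real.exp (-(s * b)) < 1 := by
        rw [Real.exp_lt_one_iff]; nlinarith
      linarith
    have hexp : Real.exp (s * bstar) * Real.exp (-(s * b)) = Real.exp (-(s * (b - bstar))) := by
      rw [← Real.exp_add]; ring_nf
    have hkey : 1 + (-(s * (b - bstar))) ≤ Real.exp (-(s * (b - bstar))) := by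
      linarith [Real.add_one_le_exp (-(s * (b - bstar)))]
    have hineq : Real.exp (s * bstar) * (1 - Real.exp (-(s * b))) ≤ (K + b) * s := by
      nlinarith [hexp, hkey, hcrit']
    rw [le_sub_iff_add_le, le_div_iff₀ hDb]
    have h1s : (K + bstar + 1 / s) * s = Real.exp (s * bstar) := by
      rw [hcrit']; field_simp; ring
    have h2 : (K + bstar + 1 / s) * (1 - Real.exp (-(s * b))) * s
        = Real.exp (s * bstar) * (1 - Real.exp (-(s * b))) := by
      rw [← h1s]; ring
    have h3 : (K + bstar + 1 / s) * (1 - Real.exp (-(s * b))) * s ≤ (K + b) * s := by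
      rw [h2]; linarith [hineq]
    exact le_of_mul_le_mul_right h3 hs
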